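/- Let μ ≥ 1 be a fixed integer, and suppose the integer k ≥ 1 is not divisible by any odd prime p < 2^μ. Then the polynomial z^k + 1 divides f_{2^μ, (k+1)2^μ − 1}(z) in ℤ[z]. -/

import Mathlib

open Polynomial Finset

lemma descFactorial_cast_ring {R : Type*} [CommRing R] (a m : ℕ) :
    (a.descFactorial m : R) = ∏ i ∈ Finset.range m, ((a : R) - i) := by
  induction m with
  | zero => simp
  | succ m ih =>
    rw [Nat.descFactorial_succ, Finset.prod_range_succ, ← ih]
    rcases le_or_gt m a with h | h
    · push_cast [h]; ring
    · rw [Nat.descFactorial_eq_zero_iff_lt.mpr h]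
      simp

lemma prod_neg' {R : Type*} [CommRing R] (s : Finset ℕ) (f : ℕ → R) :
    ∏ i ∈ s, (-(f i)) = (-1)^s.card * ∏ i ∈ s, f i := by
  rw [← Finset.prod_const (-1 : R), ← Finset.prod_mul_distrib]
  exact Finset.prod_congr rfl (fun i _ => by ring)

lemma reflect_prod {R : Type*} [CommRing R] (m : ℕ) (hm2 : 2 ∣ m) (a : R) (j : ℕ) :
    ∏ i ∈ range m, (a * m + (m : R) - 1 - j - i) = ∏ i ∈ range m, (a * m + ((i : R) - j)) := by
  have h1 : ∀ i ∈ range m, (a * m + (m:R) - 1 - j - i)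
      = (fun (i : ℕ) => (a * m + ((i:R) - j))) (m - 1 - i) := by
    intro i hi
    have hi' : i < m := mem_range.mp hi
    simp only
    rw [Nat.cast_sub (by omega : i ≤ m - 1), Nat.cast_sub (by omega : 1 ≤ m)]
    push_cast
    ring
  rw [Finset.prod_congr rfl h1]
  exact Finset.prod_range_reflect (fun (i : ℕ) => (a * (m:R) + ((i:R) - j))) m

lemma odd_part (m u k j n : ℕ) (hm2 : 2 ∣ m) (huk : u ∣ k) (hn1 : n + 1 = (k+1)*m)
    (hj : j ≤ n) :
    (u : ℤ) ∣ (((n-j).descFactorial m : ℤ) - (j.descFactorial m : ℤ)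
      - (k:ℤ) * (Nat.factorial m : ℤ)) := by
  rw [← ZMod.intCast_zmod_eq_zero_iff_dvd]
  push_cast
  rw [descFactorial_cast_ring, descFactorial_cast_ring]
  have hk0 : (k : ZMod u) = 0 := (ZMod.natCast_eq_zero_iff k u).mpr huk
  have hnj : ((n - j : ℕ) : ZMod u) = (m : ZMod u) - 1 - j := by
    rw [Nat.cast_sub hj]
    have hn : ((n : ℕ) : ZMod u) + 1 = ((k+1)*m : ℕ) := by exact_mod_cast congrArg (Nat.cast : ℕ → ZMod u) hn1
    push_cast [hk0] at hn
    have : (n : ZMod u) = (m : ZMod u) - 1 := by linear_combination hn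
    rw [this]
  rw [hnj, hk0]
  have hrefl : ∏ i ∈ range m, ((m : ZMod u) - 1 - j - i)
      = ∏ i ∈ range m, ((j : ZMod u) - i) := by
    have := reflect_prod m hm2 (0 : ZMod u) j
    simp only [zero_mul, zero_add] at this
    rw [this]
    have h2 : ∀ i ∈ range m, ((i:ZMod u) - j) = -(((j:ZMod u)) - i) := by intro _ _; ring
    rw [Finset.prod_congr rfl h2, prod_neg', Finset.card_range,
      Even.neg_one_pow (by exact (even_iff_two_dvd).mpr hm2), one_mul]
  rw [hrefl]
  ring

lemma v2_two_pow_factorial (μ : ℕ) : padicValNat 2 (Nat.factorial (2^μ)) = 2^μ - 1 := by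
  induction μ with
  | zero => simp
  | succ μ ih =>
    have h : (2:ℕ)^(μ+1) = 2 * 2^μ := by ring
    rw [h, padicValNat_factorial_mul, ih]
    have : 1 ≤ (2:ℕ)^μ := Nat.one_le_two_pow
    omega

lemma v2_sum_range (N : ℕ) :
    ∑ r ∈ Finset.range N, padicValNat 2 r = padicValNat 2 (Nat.factorial (N-1)) := by
  induction N with
  | zero => simp
  | succ N ih =>
    rw [Finset.sum_range_succ, ih]
    rcases Nat.eq_zero_or_pos N with h | h
    · subst h; simp
    · rw [Nat.add_sub_cancel, ← Nat.mul_factorial_pred (Nat.pos_iff_ne_zero.mp h),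
        padicValNat.mul (by omega) (Nat.factorial_ne_zero _)]
      omega

lemma ineq1 (cc a b ES V V' : ℕ) (hES : ES ≤ (b+1)*a) (hV : ES + V' = V) :
    cc + ((a+1) + V + 1) ≤ (cc+(a+1))*(b+2) + V' := by nlinarith
lemma ineq2 (cc a b ES V V' : ℕ) (hES : ES ≤ (b+1)*a) (hV : ES + V' = V) :
    cc + ((a+1) + V + 1) ≤ (cc+(a+1))*(b+1) + ((a+1) + V') := by nlinarith

theorem two_part (μ c k j : ℕ) (hμ : 1 ≤ μ) (hk : 1 ≤ k) (hck : (2:ℕ)^c ∣ k)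
    (hj : j ≤ (k+1)*2^μ - 1) :
    (2:ℤ)^(c + 2^μ) ∣ ((((k+1)*2^μ - 1 - j).descFactorial (2^μ) : ℤ)
      - (j.descFactorial (2^μ) : ℤ) - (k:ℤ) * (Nat.factorial (2^μ) : ℤ)) := by
  have hFact2 : Fact (Nat.Prime 2) := ⟨Nat.prime_two⟩
  set m := 2^μ with hm
  have hm1 : 1 ≤ m := Nat.one_le_two_pow
  have hkm1 : 1 ≤ (k+1)*m := Nat.mul_pos (by omega) (by omega)
  have hmeven : Even m := by rw [hm]; exact (Nat.even_pow).mpr ⟨even_two, by omega⟩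
  set n := (k+1)*m - 1 with hn
  have hjn : j ≤ n := hj
  have hncast : ((n:ℕ):ℤ) = (k:ℤ)*m + m - 1 := by
    rw [hn, Nat.cast_sub hkm1]; push_cast; ring
  set A : ℕ → ℤ := fun i => (i:ℤ) - j with hA
  set s0 := j % m with hs0
  have hs0m : s0 < m := Nat.mod_lt _ (by omega)
  set r : ℕ → ℕ := fun i => if i ≤ s0 then s0 - i else m + s0 - i with hr
  set e : ℕ → ℕ := fun i => padicValNat 2 (r i) with he
  set V := padicValNat 2 (Nat.factorial (m-1)) with hV
  have hmuV : μ + V + 1 = m := by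
    have h1 : padicValNat 2 (Nat.factorial m) = m - 1 := by rw [hm]; exact v2_two_pow_factorial μ
    have h2 : m * Nat.factorial (m-1) = Nat.factorial m := Nat.mul_factorial_pred (by omega)
    have h3 : padicValNat 2 (m * Nat.factorial (m-1)) = padicValNat 2 m + V :=
      padicValNat.mul (by omega) (Nat.factorial_ne_zero _)
    have h4 : padicValNat 2 m = μ := by rw [hm]; exact padicValNat.prime_pow μ
    rw [h2, h1, h4] at h3
    omega
  have hm2Z : ((2:ℤ))^μ = (m:ℤ) := by rw [hm]; push_cast; ring
  have hdm : (m:ℤ) ∣ (j:ℤ) - s0 := by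
    refine ⟨((j / m : ℕ) : ℤ), ?_⟩
    have h := Nat.div_add_mod j m
    have h' : (j:ℤ) = (m:ℤ) * ((j/m : ℕ):ℤ) + (s0:ℤ) := by exact_mod_cast h.symm
    linarith
  have hrcast : ∀ i, i < m → ((r i : ℕ) : ℤ) = if i ≤ s0 then (s0:ℤ) - i else (m:ℤ) + s0 - i := by
    intro i him
    simp only [hr]
    split_ifs with h'
    · exact Nat.cast_sub h'
    · rw [Nat.cast_sub (by omega : i ≤ m + s0)]; push_cast; ring
  have hstepA : ∀ i, i < m → (m:ℤ) ∣ A i + r i := by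
    intro i him
    simp only [hA]
    rw [hrcast i him]
    split_ifs with h'
    · have heq : (i:ℤ) - j + ((s0:ℤ) - i) = -((j:ℤ) - s0) := by ring
      rw [heq]; exact dvd_neg.mpr hdm
    · have heq : (i:ℤ) - j + ((m:ℤ) + s0 - i) = (m:ℤ) - ((j:ℤ) - s0) := by ring
      rw [heq]; exact dvd_sub dvd_rfl hdm
  have hrs0 : r s0 = 0 := by simp only [hr]; simp
  have hes0 : e s0 = 0 := by simp only [he, hrs0]; simp
  have hrne : ∀ i, i < m → i ≠ s0 → r i ≠ 0 ∧ r i < m := by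
    intro i him hne
    simp only [hr]; split_ifs with h' <;> omega
  have heb : ∀ i, i < m → i ≠ s0 → e i + 1 ≤ μ := by
    intro i him hne
    obtain ⟨hr0, hrm⟩ := hrne i him hne
    by_contra hcon
    have h1 : (2:ℕ)^μ ∣ 2^(e i) := pow_dvd_pow 2 (by omega)
    have h2 : (2:ℕ)^(e i) ∣ r i := pow_padicValNat_dvd
    have := Nat.le_of_dvd (by omega) (h1.trans h2)
    omega
  have hAs0 : (2:ℤ)^μ ∣ A s0 := by
    rw [hm2Z]
    have := hstepA s0 hs0m
    rwa [hrs0, Nat.cast_zero, add_zero] at this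
  have hAdvd : ∀ i, i < m → i ≠ s0 → (2:ℤ)^(e i) ∣ A i := by
    intro i him hne
    have h1 : (2:ℤ)^(e i) ∣ (m:ℤ) := by
      rw [← hm2Z]; exact pow_dvd_pow 2 (by have := heb i him hne; omega)
    have h2 : (2:ℤ)^(e i) ∣ (r i : ℤ) := by
      exact_mod_cast Int.natCast_dvd_natCast.mpr (pow_padicValNat_dvd (p := 2) (n := r i))
    have h3 := dvd_sub (h1.trans (hstepA i him)) h2
    simpa using h3
  set U : ℕ → ℤ := fun i => A i / 2^(e i) with hUdef
  have hAU : ∀ i, i < m → i ≠ s0 → A i = 2^(e i) * U i := by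
    intro i him hne
    exact (Int.mul_ediv_cancel' (hAdvd i him hne)).symm
  have hUodd : ∀ i, i < m → i ≠ s0 → ¬ (2:ℤ) ∣ U i := by
    intro i him hne hdvd
    obtain ⟨w, hw⟩ := hdvd
    have h1 : (2:ℤ)^(e i + 1) ∣ A i := by
      rw [hAU i him hne, hw, pow_succ]; exact ⟨w, by ring⟩
    have h2 : (2:ℤ)^(e i + 1) ∣ (m:ℤ) := by
      rw [← hm2Z]; exact pow_dvd_pow 2 (heb i him hne)
    have h3 : (2:ℤ)^(e i + 1) ∣ (r i : ℤ) := by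
      have := dvd_sub (h2.trans (hstepA i him)) h1
      simpa using this
    have h4 : (2:ℕ)^(e i + 1) ∣ r i := by exact_mod_cast h3
    exact pow_succ_padicValNat_not_dvd (hrne i him hne).1 h4
  have hsum : ∑ i ∈ range m, e i = V := by
    have hb : ∑ i ∈ range m, e i = ∑ d ∈ range m, padicValNat 2 d := by
      apply Finset.sum_nbij' (fun i => r i) (fun d => r d)
      · intro a ha
        simp only [mem_range] at ha ⊢
        simp only [hr]; split_ifs <;> omega
      · intro a ha
        simp only [mem_range] at ha ⊢
        simp only [hr]; split_ifs <;> omega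
      · intro a ha
        simp only [mem_range] at ha
        simp only [hr]; split_ifs <;> omega
      · intro a ha
        simp only [mem_range] at ha
        simp only [hr]; split_ifs <;> omega
      · intro a _; rfl
    rw [hb, v2_sum_range m, ← hV]
  have hVerase : ∑ i ∈ (range m).erase s0, e i = V := by
    have := Finset.add_sum_erase (range m) e (mem_range.mpr hs0m)
    omega
  have hckm : (2:ℤ)^(c+μ) ∣ (k:ℤ)*m := by
    rw [pow_add, hm2Z]
    exact mul_dvd_mul (by exact_mod_cast Int.natCast_dvd_natCast.mpr hck) dvd_rfl
  set W := ∏ i ∈ (range m).erase s0, A i with hW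
  set W0 := ∏ i ∈ (range m).erase s0, U i with hW0
  have hWeq : W = 2^V * W0 := by
    have hstep : ∏ i ∈ (range m).erase s0, A i
        = ∏ i ∈ (range m).erase s0, ((2:ℤ)^(e i) * U i) :=
      Finset.prod_congr rfl (fun i hi => by
        rw [mem_erase, mem_range] at hi
        exact hAU i hi.2 hi.1)
    rw [hW, hW0, hstep, Finset.prod_mul_distrib, Finset.prod_pow_eq_pow_sum, hVerase]
  have hW0odd : ¬ (2:ℤ) ∣ W0 := by
    rw [hW0]
    intro hdvd
    obtain ⟨a, ha, hdvda⟩ := (Int.prime_two.dvd_finset_prod_iff U).mp hdvd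
    rw [mem_erase, mem_range] at ha
    exact hUodd a ha.2 ha.1 hdvda
  have hfactdec : ∃ g : ℕ, Nat.factorial (m-1) = 2^V * g ∧ ¬ 2 ∣ g := by
    refine ⟨Nat.factorial (m-1) / 2^V, (Nat.mul_div_cancel' (pow_padicValNat_dvd)).symm, ?_⟩
    intro ⟨w, hw⟩
    have h1 : (2:ℕ)^(V+1) ∣ Nat.factorial (m-1) := by
      have h2 : Nat.factorial (m-1) = 2^V * (2 * w) := by
        rw [← hw, Nat.mul_div_cancel' (pow_padicValNat_dvd)]
      exact ⟨w, by rw [h2, pow_succ]; ring⟩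
    exact pow_succ_padicValNat_not_dvd (Nat.factorial_ne_zero _) h1
  obtain ⟨g, hgeq, hgodd⟩ := hfactdec
  have hWJ : (2:ℤ)^(V+1) ∣ W - (Nat.factorial (m-1) : ℤ) := by
    rw [hWeq, hgeq]
    push_cast
    rw [pow_succ, show (2:ℤ)^V * W0 - 2^V * g = 2^V * (W0 - g) by ring]
    apply mul_dvd_mul_left
    have hOW : Odd W0 := Int.not_even_iff_odd.mp (fun h => hW0odd h.two_dvd)
    have hOg : Odd ((g:ℕ) : ℤ) := Int.not_even_iff_odd.mp
      (fun h => hgodd (by exact_mod_cast h.two_dvd))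
    exact (hOW.sub_odd hOg).two_dvd
  -- the per-subset divisibility
  have hK : ∀ S ∈ (((range m).powerset.erase ∅).erase {s0}),
      (2:ℤ)^(c+m) ∣ ((k:ℤ)*m)^S.card * ∏ i ∈ range m \ S, A i := by
    intro S hS
    have hSne0 : S ≠ {s0} := (Finset.mem_erase.mp hS).1
    have hS' := (Finset.mem_erase.mp hS).2
    have hSne : S ≠ ∅ := (Finset.mem_erase.mp hS').1
    have hSsub : S ⊆ range m := Finset.mem_powerset.mp (Finset.mem_erase.mp hS').2
    have hσ1 : 1 ≤ S.card := Finset.card_pos.mpr (Finset.nonempty_iff_ne_empty.mpr hSne)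
    have hVsplit : (∑ i ∈ ((range m).erase s0) ∩ S, e i)
        + (∑ i ∈ ((range m).erase s0) \ S, e i) = V := by
      rw [Finset.sum_inter_add_sum_sdiff]; exact hVerase
    have hdvdT : (2:ℤ)^(∑ i ∈ ((range m).erase s0) \ S, e i)
        ∣ ∏ i ∈ ((range m).erase s0) \ S, A i := by
      rw [← Finset.prod_pow_eq_pow_sum]
      apply Finset.prod_dvd_prod_of_dvd
      intro i hi
      rw [mem_sdiff, mem_erase, mem_range] at hi
      exact hAdvd i hi.1.2 hi.1.1
    have hdvdK : (2:ℤ)^((c+μ)*S.card) ∣ ((k:ℤ)*m)^S.card := by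
      rw [pow_mul]; exact pow_dvd_pow_of_dvd hckm _
    have hEb : (∑ i ∈ ((range m).erase s0) ∩ S, e i)
        ≤ (#(((range m).erase s0) ∩ S)) * (μ - 1) := by
      have := Finset.sum_le_card_nsmul (((range m).erase s0) ∩ S) e (μ-1) (by
        intro x hx
        rw [mem_inter, mem_erase, mem_range] at hx
        have := heb x hx.1.2 hx.1.1
        omega)
      simpa [smul_eq_mul] using this
    obtain ⟨a, ha⟩ : ∃ a, μ = a + 1 := ⟨μ - 1, by omega⟩
    by_cases hs0S : s0 ∈ S
    · -- σ ≥ 2, kept product is over erase diff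
      have hσ2 : 2 ≤ S.card := by
        rcases Nat.lt_or_ge S.card 2 with h | h
        · exfalso
          have h1 : S.card = 1 := by omega
          obtain ⟨x, hx⟩ := Finset.card_eq_one.mp h1
          rw [hx] at hs0S
          exact hSne0 (by rw [hx, ← Finset.mem_singleton.mp hs0S])
        · exact h
      obtain ⟨b, hb⟩ : ∃ b, S.card = b + 2 := ⟨S.card - 2, by omega⟩
      have hTeq : range m \ S = ((range m).erase s0) \ S := by
        rw [Finset.erase_sdiff_comm, Finset.erase_eq_of_notMem (by simp [hs0S])]
      have hcard : #(((range m).erase s0) ∩ S) ≤ S.card - 1 := by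
        have hsub : ((range m).erase s0) ∩ S ⊆ S.erase s0 := by
          intro x hx
          rw [mem_inter, mem_erase, mem_range] at hx
          rw [mem_erase]
          exact ⟨hx.1.1, hx.2⟩
        have := Finset.card_le_card hsub
        rw [Finset.card_erase_of_mem hs0S] at this
        exact this
      have hES' : (∑ i ∈ ((range m).erase s0) ∩ S, e i) ≤ (b+1)*a := by
        calc (∑ i ∈ ((range m).erase s0) ∩ S, e i)
            ≤ (#(((range m).erase s0) ∩ S)) * (μ - 1) := hEb
          _ ≤ (b+1)*a := Nat.mul_le_mul (by omega) (by omega)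
      have hineq : c + m ≤ (c+μ)*S.card + (∑ i ∈ ((range m).erase s0) \ S, e i) := by
        have := ineq1 c a b (∑ i ∈ ((range m).erase s0) ∩ S, e i) V
          (∑ i ∈ ((range m).erase s0) \ S, e i) hES' hVsplit
        rw [hb, ha]
        omega
      have hdvd2 : (2:ℤ)^((c+μ)*S.card) * (2:ℤ)^(∑ i ∈ ((range m).erase s0) \ S, e i)
          ∣ ((k:ℤ)*m)^S.card * ∏ i ∈ range m \ S, A i := by
        rw [hTeq]
        exact mul_dvd_mul hdvdK hdvdT
      calc (2:ℤ)^(c+m) ∣ (2:ℤ)^((c+μ)*S.card) * (2:ℤ)^(∑ i ∈ ((range m).erase s0) \ S, e i) := by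
            rw [← pow_add]; exact pow_dvd_pow 2 hineq
        _ ∣ _ := hdvd2
    · -- s0 ∉ S
      obtain ⟨b, hb⟩ : ∃ b, S.card = b + 1 := ⟨S.card - 1, by omega⟩
      have hmem : s0 ∈ range m \ S := by
        rw [mem_sdiff, mem_range]; exact ⟨hs0m, hs0S⟩
      have hsplitP : ∏ i ∈ range m \ S, A i
          = A s0 * ∏ i ∈ ((range m).erase s0) \ S, A i := by
        rw [← Finset.mul_prod_erase _ _ hmem, Finset.erase_sdiff_comm]
      have hcard : #(((range m).erase s0) ∩ S) ≤ S.card :=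
        Finset.card_le_card Finset.inter_subset_right
      have hES' : (∑ i ∈ ((range m).erase s0) ∩ S, e i) ≤ (b+1)*a := by
        calc (∑ i ∈ ((range m).erase s0) ∩ S, e i)
            ≤ (#(((range m).erase s0) ∩ S)) * (μ - 1) := hEb
          _ ≤ (b+1)*a := Nat.mul_le_mul (by omega) (by omega)
      have hineq : c + m ≤ (c+μ)*S.card + (μ + (∑ i ∈ ((range m).erase s0) \ S, e i)) := by
        have := ineq2 c a b (∑ i ∈ ((range m).erase s0) ∩ S, e i) V
          (∑ i ∈ ((range m).erase s0) \ S, e i) hES' hVsplit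
        rw [hb, ha]
        omega
      have hdvd2 : (2:ℤ)^((c+μ)*S.card) * ((2:ℤ)^μ * (2:ℤ)^(∑ i ∈ ((range m).erase s0) \ S, e i))
          ∣ ((k:ℤ)*m)^S.card * ∏ i ∈ range m \ S, A i := by
        rw [hsplitP]
        exact mul_dvd_mul hdvdK (mul_dvd_mul hAs0 hdvdT)
      calc (2:ℤ)^(c+m)
          ∣ (2:ℤ)^((c+μ)*S.card) * ((2:ℤ)^μ * (2:ℤ)^(∑ i ∈ ((range m).erase s0) \ S, e i)) := by
            rw [← pow_add, ← pow_add]; exact pow_dvd_pow 2 hineq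
        _ ∣ _ := hdvd2
  -- assembling
  have hdesc_nj : ((n-j).descFactorial m : ℤ)
      = ∑ S ∈ (range m).powerset, ((k:ℤ)*m)^S.card * ∏ i ∈ range m \ S, A i := by
    rw [descFactorial_cast_ring]
    have h0 : ∀ i ∈ range m, (((n-j : ℕ):ℤ) - i) = ((k:ℤ) * m + (m:ℤ) - 1 - j - i) := by
      intro i hi
      rw [Nat.cast_sub hjn, hncast]
    rw [Finset.prod_congr rfl h0, reflect_prod m hmeven.two_dvd ((k:ℤ)) j,
      Finset.prod_add]
    apply Finset.sum_congr rfl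
    intro S hS
    rw [Finset.prod_const]
  have hdesc_j : (j.descFactorial m : ℤ) = ∏ i ∈ range m, A i := by
    rw [descFactorial_cast_ring]
    have h2 : ∀ i ∈ range m, ((j:ℤ) - i) = -(((i:ℤ) - j)) := fun _ _ => by ring
    rw [Finset.prod_congr rfl h2, prod_neg', card_range, Even.neg_one_pow hmeven, one_mul]
  have hmemE : (∅ : Finset ℕ) ∈ (range m).powerset := Finset.empty_mem_powerset _
  have hmemS : ({s0} : Finset ℕ) ∈ ((range m).powerset.erase ∅) := by
    rw [Finset.mem_erase]
    exact ⟨Finset.singleton_ne_empty s0,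
      Finset.mem_powerset.mpr (Finset.singleton_subset_iff.mpr (mem_range.mpr hs0m))⟩
  set F : Finset ℕ → ℤ := fun S => ((k:ℤ)*m)^S.card * ∏ i ∈ range m \ S, A i with hF
  have hpeel : ∑ S ∈ (range m).powerset, F S
      = F ∅ + (F {s0} + ∑ S ∈ (((range m).powerset.erase ∅).erase {s0}), F S) := by
    rw [Finset.add_sum_erase _ F hmemS, Finset.add_sum_erase _ F hmemE]
  have hFempty : F ∅ = ∏ i ∈ range m, A i := by
    simp only [hF, Finset.card_empty, pow_zero, one_mul, Finset.sdiff_empty]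
  have hFsingle : F {s0} = ((k:ℤ)*m) * W := by
    simp only [hF, Finset.card_singleton, pow_one, hW]
    rw [← Finset.erase_eq]
  have hfactZ : ((Nat.factorial m : ℕ) : ℤ) = (m:ℤ) * (Nat.factorial (m-1) : ℤ) := by
    exact_mod_cast (Nat.mul_factorial_pred (show m ≠ 0 by omega)).symm
  have hgoal_eq : ((n-j).descFactorial m : ℤ) - (j.descFactorial m : ℤ)
        - (k:ℤ) * (Nat.factorial m : ℤ)
      = (∑ S ∈ (((range m).powerset.erase ∅).erase {s0}), F S)
        + ((k:ℤ)*m) * (W - (Nat.factorial (m-1) : ℤ)) := by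
    rw [hdesc_nj, show (∑ S ∈ (range m).powerset, ((k:ℤ)*m)^S.card * ∏ i ∈ range m \ S, A i)
        = ∑ S ∈ (range m).powerset, F S from rfl, hpeel, hFempty, hFsingle, hdesc_j, hfactZ]
    ring
  rw [hgoal_eq]
  apply dvd_add
  · exact Finset.dvd_sum hK
  · rw [show c + m = (c+μ) + (V+1) by omega, pow_add]
    exact mul_dvd_mul hckm hWJ

lemma two_decomp (N : ℕ) (hN : N ≠ 0) :
    ∃ g, N = 2^(padicValNat 2 N) * g ∧ ¬ 2 ∣ g := by
  have hFact2 : Fact (Nat.Prime 2) := ⟨Nat.prime_two⟩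
  refine ⟨N / 2^(padicValNat 2 N), (Nat.mul_div_cancel' pow_padicValNat_dvd).symm, ?_⟩
  intro ⟨w, hw⟩
  have h2 : N = 2^(padicValNat 2 N) * (2 * w) := by
    rw [← hw, Nat.mul_div_cancel' pow_padicValNat_dvd]
  have h1 : (2:ℕ)^(padicValNat 2 N + 1) ∣ N := ⟨w, by nth_rewrite 1 [h2]; ring⟩
  exact pow_succ_padicValNat_not_dvd hN h1

lemma coprime_two_pow_int (t : ℕ) (g : ℕ) (hg : ¬ 2 ∣ g) : IsCoprime ((2:ℤ)^t) (g:ℤ) := by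
  apply IsCoprime.pow_left
  have h := Nat.isCoprime_iff_coprime.mpr ((Nat.Prime.coprime_iff_not_dvd Nat.prime_two).mpr hg)
  exact_mod_cast h

lemma key (μ k : ℕ) (hμ : 1 ≤ μ) (hk : 1 ≤ k)
    (hkp : ∀ p : ℕ, p.Prime → Odd p → p < 2 ^ μ → ¬ p ∣ k) (j : ℕ)
    (hj : j ≤ (k+1)*2^μ - 1) :
    (2 * k : ℤ) ∣ ((((k+1)*2^μ - 1 - j).choose (2^μ) : ℤ) - (j.choose (2^μ) : ℤ) - k) := by
  have hFact2 : Fact (Nat.Prime 2) := ⟨Nat.prime_two⟩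
  set m := 2^μ with hm
  have hm1 : 1 ≤ m := Nat.one_le_two_pow
  have hmeven : Even m := by rw [hm]; exact (Nat.even_pow).mpr ⟨even_two, by omega⟩
  set n := (k+1)*m - 1 with hn
  have hkm1 : 1 ≤ (k+1)*m := Nat.mul_pos (by omega) (by omega)
  have hn1 : n + 1 = (k+1)*m := by omega
  set c := padicValNat 2 k with hc
  set u := k / 2^c with hu
  have hcd : (2:ℕ)^c ∣ k := pow_padicValNat_dvd
  have hku : k = 2^c * u := (Nat.mul_div_cancel' hcd).symm
  have hu0 : u ≠ 0 := by intro h; rw [h, mul_zero] at hku; omega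
  have huk : u ∣ k := ⟨2^c, by rw [hku]; ring⟩
  have huodd : ¬ 2 ∣ u := by
    intro ⟨w, hw⟩
    have h1 : (2:ℕ)^(c+1) ∣ k := ⟨w, by rw [hku, hw, pow_succ]; ring⟩
    exact pow_succ_padicValNat_not_dvd (by omega) h1
  set D : ℤ := (((n-j).choose m : ℕ) : ℤ) - ((j.choose m : ℕ) : ℤ) - k with hD
  have hJeq : ((n-j).descFactorial m : ℤ) - (j.descFactorial m : ℤ)
      - (k:ℤ) * (Nat.factorial m : ℤ) = (Nat.factorial m : ℤ) * D := by
    have e1 : ((n-j).descFactorial m : ℤ) = (Nat.factorial m : ℤ) * (((n-j).choose m : ℕ) : ℤ) := by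
      exact_mod_cast congrArg (Nat.cast : ℕ → ℤ) (Nat.descFactorial_eq_factorial_mul_choose (n-j) m)
    have e2 : ((j).descFactorial m : ℤ) = (Nat.factorial m : ℤ) * (((j).choose m : ℕ) : ℤ) := by
      exact_mod_cast congrArg (Nat.cast : ℕ → ℤ) (Nat.descFactorial_eq_factorial_mul_choose j m)
    rw [e1, e2, hD]; ring
  have h2p : (2:ℤ)^(c+m) ∣ (((n-j).descFactorial m : ℤ) - (j.descFactorial m : ℤ)
      - (k:ℤ) * (Nat.factorial m : ℤ)) := two_part μ c k j hμ hk hcd hj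
  rw [hJeq] at h2p
  have hop := odd_part m u k j n hmeven.two_dvd huk hn1 hj
  rw [hJeq] at hop
  have hv2fact : padicValNat 2 (Nat.factorial m) = m - 1 := by rw [hm]; exact v2_two_pow_factorial μ
  obtain ⟨g, hgeq, hgodd⟩ := two_decomp (Nat.factorial m) (Nat.factorial_ne_zero m)
  rw [hv2fact] at hgeq
  have h2D : (2:ℤ)^(c+1) ∣ D := by
    have hg : ((Nat.factorial m : ℕ) : ℤ) = 2^(m-1) * (g:ℤ) := by exact_mod_cast hgeq
    rw [hg] at h2p
    obtain ⟨w, hw⟩ := h2p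
    have hcancel : (g:ℤ) * D = 2^(c+1) * w := by
      have h2ne : ((2:ℤ)^(m-1)) ≠ 0 := by positivity
      apply mul_left_cancel₀ h2ne
      rw [show (2:ℤ)^(m-1) * ((g:ℤ)*D) = 2^(m-1) * (g:ℤ) * D by ring, hw,
        show (2:ℤ)^(c+m) = 2^(m-1) * 2^(c+1) by rw [← pow_add]; congr 1; omega]
      ring
    exact (coprime_two_pow_int (c+1) g hgodd).dvd_of_dvd_mul_left ⟨w, hcancel⟩
  have huD : (u:ℤ) ∣ D := by
    have hcop : Nat.Coprime u (Nat.factorial m) := by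
      by_contra hnc
      obtain ⟨p, hp, hpu, hpf⟩ := Nat.Prime.not_coprime_iff_dvd.mp hnc
      have hpne2 : p ≠ 2 := fun h => huodd (h ▸ hpu)
      have hpodd : Odd p := hp.odd_of_ne_two hpne2
      have hpm : p ≤ m := (Nat.Prime.dvd_factorial hp).mp hpf
      have hplt : p < m := by
        rcases Nat.lt_or_ge p m with h | h
        · exact h
        · exfalso
          have hpe : p = m := by omega
          have : Even p := by rw [hpe, hm]; exact (Nat.even_pow).mpr ⟨even_two, by omega⟩
          exact (Nat.not_even_iff_odd.mpr hpodd) this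
      exact hkp p hp hpodd hplt (hpu.trans huk)
    have hcopZ : IsCoprime ((u:ℕ):ℤ) ((Nat.factorial m : ℕ):ℤ) := Nat.isCoprime_iff_coprime.mpr hcop
    exact hcopZ.dvd_of_dvd_mul_left hop
  have hcop2u : IsCoprime ((2:ℤ)^(c+1)) ((u:ℕ):ℤ) := coprime_two_pow_int (c+1) u huodd
  have hfin : ((2:ℤ)^(c+1) * u) ∣ D := hcop2u.mul_dvd h2D huD
  have h2k : (2*(k:ℤ)) = (2:ℤ)^(c+1) * u := by
    have hkuZ : (k:ℤ) = 2^c * (u:ℤ) := by exact_mod_cast hku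
    rw [hkuZ]; ring
  show (2*(k:ℤ)) ∣ D
  rw [h2k]
  exact hfin

theorem stmt_13 (μ k : ℕ) (hμ : 1 ≤ μ) (hk : 1 ≤ k)
    (hkp : ∀ p : ℕ, p.Prime → Odd p → p < 2 ^ μ → ¬ p ∣ k) :
    (Polynomial.X ^ k + 1 : ℤ[X]) ∣
      ∑ j ∈ Finset.range ((k + 1) * 2 ^ μ - 1 + 1),
        Polynomial.C ((((k + 1) * 2 ^ μ - 1).choose j : ℤ)) * Polynomial.X ^ (j.choose (2 ^ μ)) := by
  set m := 2^μ with hm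
  have hm1 : 1 ≤ m := Nat.one_le_two_pow
  set n := (k+1)*m - 1 with hn
  set h := (k+1)*2^(μ-1) with hh
  have hpos : 1 ≤ h := Nat.mul_pos (by omega) (by positivity)
  have h2 : n + 1 = h + h := by
    have e1 : m = 2^(μ-1) * 2 := by
      rw [hm, ← pow_succ]
      congr 1
      omega
    have e2 : (k+1) * m = h + h := by rw [e1, hh]; ring
    omega
  have hkm1 : 1 ≤ (k+1)*m := Nat.mul_pos (by omega) (by omega)
  rw [h2, Finset.sum_range_add]
  have hrefl : ∑ i ∈ range h, (C ((n.choose (h+i) : ℤ)) * X ^ ((h+i).choose m) : ℤ[X])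
      = ∑ i ∈ range h, (C ((n.choose (n-i) : ℤ)) * X ^ ((n-i).choose m) : ℤ[X]) := by
    rw [← Finset.sum_range_reflect (fun i => (C ((n.choose (h+i) : ℤ)) * X ^ ((h+i).choose m) : ℤ[X])) h]
    apply Finset.sum_congr rfl
    intro i hi
    rw [mem_range] at hi
    have : h + (h - 1 - i) = n - i := by omega
    rw [this]
  rw [hrefl, ← Finset.sum_add_distrib]
  apply Finset.dvd_sum
  intro j hj
  rw [mem_range] at hj
  have hjn : j ≤ n := by omega
  have hj2 : j ≤ n - j := by omega
  have hsym : (n.choose (n-j)) = n.choose j := Nat.choose_symm hjn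
  have hmono : j.choose m ≤ (n-j).choose m := Nat.choose_le_choose m hj2
  obtain ⟨t, ht⟩ : ∃ t : ℕ, (n-j).choose m = j.choose m + (k + 2*k*t) := by
    obtain ⟨s, hs⟩ := key μ k hμ hk hkp j (by rw [← hm]; omega)
    have hs0 : 0 ≤ s := by
      rcases le_or_gt 0 s with h' | h'
      · exact h'
      · exfalso
        have h1 : s ≤ -1 := by omega
        have hkk : (1:ℤ) ≤ (k:ℤ) := by exact_mod_cast hk
        have h2' : (2*(k:ℤ)) * s ≤ (2*(k:ℤ)) * (-1) := by
          apply mul_le_mul_of_nonneg_left h1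
          linarith
        rw [← hs] at h2'
        have h3 : ((j.choose m : ℕ) : ℤ) ≤ (((n-j).choose m : ℕ) : ℤ) := by exact_mod_cast hmono
        linarith
    refine ⟨s.toNat, ?_⟩
    have hs' : (((n-j).choose m : ℕ) : ℤ) = (j.choose m : ℕ) + ((k:ℤ) + 2*k*(s.toNat)) := by
      rw [Int.toNat_of_nonneg hs0]
      linarith [hs]
    exact_mod_cast hs'
  rw [hsym, ht]
  have hpow : (X : ℤ[X]) ^ (j.choose m + (k + 2*k*t))
      = X ^ (j.choose m) * (X^k * (X^(2*k))^t) := by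
    rw [pow_add, pow_add, ← pow_mul]
  rw [hpow]
  have hdvd1 : (X^k + 1 : ℤ[X]) ∣ X^(2*k) - 1 :=
    ⟨X^k - 1, by rw [two_mul, pow_add]; ring⟩
  have hdvd2 : (X^k + 1 : ℤ[X]) ∣ (1 + X^k * (X^(2*k))^t) := by
    have hgeom : (X^(2*k) - 1 : ℤ[X]) ∣ ((X^(2*k))^t - 1) := by
      exact Dvd.intro_left _ (geom_sum_mul (X^(2*k) : ℤ[X]) t)
    have heq : (1 + X^k * (X^(2*k))^t : ℤ[X]) = X^k * ((X^(2*k))^t - 1) + (X^k + 1) := by ring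
    rw [heq]
    exact dvd_add ((hdvd1.trans hgeom).mul_left _) dvd_rfl
  calc (X^k + 1 : ℤ[X]) ∣ (1 + X^k * (X^(2*k))^t) := hdvd2
    _ ∣ C ((n.choose j : ℤ)) * X ^ (j.choose m) * (1 + X^k * (X^(2*k))^t) := Dvd.intro_left _ rfl
    _ = C ((n.choose j : ℤ)) * X ^ (j.choose m)
        + C ((n.choose j : ℤ)) * (X ^ (j.choose m) * (X^k * (X^(2*k))^t)) := by ring
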